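/- Define γ(p,q) = ½(β(p)+β(q)−β(pq)) − rl(p,q) for composable partitions p,q. Then γ(p,p*) = 0 and γ(p, p*p) = 0 for every partition p; in particular γ(p,p) = 0 for every projective partition p. Moreover, if p and q are projective partitions with pq = q, then γ(q,p) = 0. -/

import Mathlib

/-- A two-row partition with `k` upper and `l` lower points, encoded as the
equivalence relation whose classes are the blocks. -/
abbrev PP (k l : ℕ) := Setoid (Fin k ⊕ Fin l)

/-- The involution `p*` (turning `p` upside down). -/
def swapP {k l : ℕ} (p : PP k l) : PP l k := Setoid.comap Sum.swap p

/-- Disjoint union of two setoids. -/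
def sumSetoid {α β : Type*} (s : Setoid α) (t : Setoid β) : Setoid (α ⊕ β) where
  r := Sum.LiftRel s.r t.r
  iseqv := by
    refine ⟨fun x => ?_, fun {x y} h => ?_, fun {x y z} h1 h2 => ?_⟩
    · cases x with
      | inl a => exact Sum.LiftRel.inl (s.iseqv.refl a)
      | inr b => exact Sum.LiftRel.inr (t.iseqv.refl b)
    · cases h with
      | inl h => exact Sum.LiftRel.inl (s.iseqv.symm h)
      | inr h => exact Sum.LiftRel.inr (t.iseqv.symm h)
    · cases h1 with
      | inl h1 =>
        cases h2 with
        | inl h2 => exact Sum.LiftRel.inl (s.iseqv.trans h1 h2)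
      | inr h1 =>
        cases h2 with
        | inr h2 => exact Sum.LiftRel.inr (t.iseqv.trans h1 h2)

/-- Reindexing equivalence for the horizontal concatenation (tensor product). -/
def tensorEquiv (k l k' l' : ℕ) :
    (Fin (k + k') ⊕ Fin (l + l')) ≃ ((Fin k ⊕ Fin l) ⊕ (Fin k' ⊕ Fin l')) :=
  (Equiv.sumCongr finSumFinEquiv.symm finSumFinEquiv.symm).trans
    (Equiv.sumSumSumComm (Fin k) (Fin k') (Fin l) (Fin l'))

/-- Tensor product (horizontal concatenation) of partitions. -/
def tensorP {k l k' l' : ℕ} (p : PP k l) (q : PP k' l') : PP (k + k') (l + l') :=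
  Setoid.comap (tensorEquiv k l k' l') (sumSetoid p q)

/-- The relation on `k ⊔ l ⊔ m` points generated by `p` (upper part) and `q` (lower part). -/
def midRel {k l m : ℕ} (p : PP k l) (q : PP l m) :
    (Fin k ⊕ (Fin l ⊕ Fin m)) → (Fin k ⊕ (Fin l ⊕ Fin m)) → Prop := fun x y =>
  (∃ a b : Fin k ⊕ Fin l, p.r a b ∧ x = Sum.map id Sum.inl a ∧ y = Sum.map id Sum.inl b) ∨
  (∃ a b : Fin l ⊕ Fin m, q.r a b ∧ x = Sum.inr a ∧ y = Sum.inr b)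

/-- The equivalence relation generated on `k ⊔ l ⊔ m` in the composition procedure. -/
def bigS {k l m : ℕ} (p : PP k l) (q : PP l m) : Setoid (Fin k ⊕ (Fin l ⊕ Fin m)) :=
  Relation.EqvGen.setoid (midRel p q)

/-- `compP q p` is the vertical composition `qp` (apply `p : P(k,l)` first, then `q : P(l,m)`). -/
def compP {k l m : ℕ} (q : PP l m) (p : PP k l) : PP k m :=
  Setoid.comap (Sum.map id Sum.inr) (bigS p q)

/-- `rlP q p` : the number of closed loops removed in the composition `qp`,
i.e. the blocks of the generated relation consisting only of middle points. -/
noncomputable def rlP {k l m : ℕ} (q : PP l m) (p : PP k l) : ℕ :=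
  Nat.card {c : Quotient (bigS p q) //
    ∀ x, Quotient.mk (bigS p q) x = c → ∃ b : Fin l, x = Sum.inr (Sum.inl b)}

/-- `b(p)` : number of blocks. -/
noncomputable def bP {k l : ℕ} (p : PP k l) : ℕ := Nat.card (Quotient p)

/-- `t(p)` : number of through-blocks (blocks meeting both rows). -/
noncomputable def tP {k l : ℕ} (p : PP k l) : ℕ :=
  Nat.card {c : Quotient p // (∃ a : Fin k, Quotient.mk p (Sum.inl a) = c) ∧
    (∃ b : Fin l, Quotient.mk p (Sum.inr b) = c)}

/-- `β(p) = b(p) - t(p)` : number of non-through-blocks. -/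
noncomputable def betaP {k l : ℕ} (p : PP k l) : ℕ := bP p - tP p

/-- The identity partition `|^{⊗k}`. -/
def idP (k : ℕ) : PP k k := Setoid.ker (Sum.elim (fun i : Fin k => i) (fun i : Fin k => i))

/-- A pair partition: all blocks have size two. -/
def isPair {k l : ℕ} (p : PP k l) : Prop := ∀ x, Nat.card {y // p.r x y} = 2

/-- A through-partition: a pair partition each of whose blocks connects exactly one
upper point to exactly one lower point. -/
def isThrough {k : ℕ} (p : PP k k) : Prop :=
  isPair p ∧ (∀ a b : Fin k, p.r (Sum.inl a) (Sum.inl b) → a = b) ∧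
    (∀ a b : Fin k, p.r (Sum.inr a) (Sum.inr b) → a = b)

/-- A building partition. -/
def isBuilding {k l : ℕ} (p : PP k l) : Prop :=
  (∀ b b' : Fin l, p.r (Sum.inr b) (Sum.inr b') → b = b') ∧
  (∀ b : Fin l, ∃ a : Fin k, p.r (Sum.inl a) (Sum.inr b)) ∧
  (∀ b b' : Fin l, ∀ a a' : Fin k, b < b' →
    IsLeast {x : Fin k | p.r (Sum.inl x) (Sum.inr b)} a →
    IsLeast {x : Fin k | p.r (Sum.inl x) (Sum.inr b')} a' → a < a')

/-- A projective partition: symmetric and idempotent. -/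
def isProjective {k : ℕ} (p : PP k k) : Prop := swapP p = p ∧ compP p p = p

/-- Linear position of the points, reading the upper row left to right and then the
lower row right to left. -/
def posP (k l : ℕ) : Fin k ⊕ Fin l → ℕ :=
  Sum.elim (fun i => (i : ℕ)) (fun j => k + (l - 1 - (j : ℕ)))

/-- Noncrossing partitions. -/
def isNC {k l : ℕ} (p : PP k l) : Prop :=
  ¬ ∃ x1 x2 x3 x4 : Fin k ⊕ Fin l,
    posP k l x1 < posP k l x2 ∧ posP k l x2 < posP k l x3 ∧ posP k l x3 < posP k l x4 ∧
    p.r x1 x3 ∧ p.r x2 x4 ∧ ¬ p.r x1 x2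

open scoped Classical in
/-- The (unnormalized) linear map `T̊_p` associated to a partition, as a matrix. -/
noncomputable def Tmat0 {k l : ℕ} (N : ℕ) (p : PP k l) :
    Matrix (Fin l → Fin N) (Fin k → Fin N) ℂ :=
  fun j i => if (∀ x y, p.r x y → Sum.elim i j x = Sum.elim i j y) then 1 else 0

/-- The normalized map `T_p = N^{-β(p)/2} T̊_p`. -/
noncomputable def TmatN {k l : ℕ} (N : ℕ) (p : PP k l) :
    Matrix (Fin l → Fin N) (Fin k → Fin N) ℂ :=
  ((N : ℂ) ^ (-(betaP p : ℂ) / 2)) • Tmat0 N p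

/-- The correction exponent `γ(p,q) = ½(β(p)+β(q)-β(pq)) - rl(p,q)`. -/
noncomputable def gammaP {k l m : ℕ} (p : PP l m) (q : PP k l) : ℚ :=
  ((betaP p : ℚ) + (betaP q : ℚ) - (betaP (compP p q) : ℚ)) / 2 - (rlP p q : ℚ)

namespace GammaVanishingAux

open Relation Sum

/-! ### Generic tools -/

lemma mkq_eq {α : Type*} {s : Setoid α} {x y : α} :
    Quotient.mk s x = Quotient.mk s y ↔ s.r x y :=
  ⟨Quotient.exact, Quotient.sound⟩

lemma eqvGen_lift {α β : Type*} (T : Setoid β) (f : α → β) {R : α → α → Prop}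
    (h : ∀ x y, R x y → T.r (f x) (f y)) {x y : α} (hxy : Relation.EqvGen R x y) :
    T.r (f x) (f y) := by
  induction hxy with
  | rel a b hab => exact h a b hab
  | refl a => exact T.refl' _
  | symm a b _ ih => exact T.symm' ih
  | trans a b c _ _ ih1 ih2 => exact T.trans' ih1 ih2

lemma eqvGen_inv {α : Type*} {R : α → α → Prop} (G : α → Prop)
    (h : ∀ x y, R x y → (G x ↔ G y)) {x y : α} (hxy : Relation.EqvGen R x y) :
    G x ↔ G y := by
  induction hxy with
  | rel a b hab => exact h a b hab
  | refl a => exact Iff.rfl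
  | symm a b _ ih => exact ih.symm
  | trans a b c _ _ ih1 ih2 => exact ih1.trans ih2

lemma card_common {α β ι : Type*} (f : ι → α) (g : ι → β)
    (hf : Function.Surjective f) (hg : Function.Surjective g)
    (h : ∀ i j, f i = f j ↔ g i = g j) : Nat.card α = Nat.card β := by
  have hker : Setoid.ker f = Setoid.ker g := Setoid.ext fun i j => by
    simpa [Setoid.ker_def] using h i j
  exact Nat.card_congr
    (((Setoid.quotientKerEquivOfSurjective f hf).symm.trans
      (Equiv.cast (congrArg Quotient hker))).trans
      (Setoid.quotientKerEquivOfSurjective g hg))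

/-! ### Block classification -/

variable {k l : ℕ}

def upC (p : PP k l) (c : Quotient p) : Prop :=
  ∀ x, Quotient.mk p x = c → ∃ a : Fin k, x = Sum.inl a

def loC (p : PP k l) (c : Quotient p) : Prop :=
  ∀ x, Quotient.mk p x = c → ∃ b : Fin l, x = Sum.inr b

def thruC (p : PP k l) (c : Quotient p) : Prop :=
  (∃ a : Fin k, Quotient.mk p (Sum.inl a) = c) ∧ (∃ b : Fin l, Quotient.mk p (Sum.inr b) = c)

noncomputable def UPn (p : PP k l) : ℕ := Nat.card {c : Quotient p // upC p c}
noncomputable def DPn (p : PP k l) : ℕ := Nat.card {c : Quotient p // loC p c}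

lemma tP_def (p : PP k l) : tP p = Nat.card {c : Quotient p // thruC p c} := rfl

lemma trichotomy (p : PP k l) (c : Quotient p) :
    ¬ thruC p c ↔ (upC p c ∨ loC p c) := by
  obtain ⟨x, rfl⟩ := Quotient.exists_rep c
  constructor
  · intro h
    match x with
    | Sum.inl a =>
      left
      intro y hy
      match y with
      | Sum.inl a' => exact ⟨a', rfl⟩
      | Sum.inr b' => exact absurd ⟨⟨a, rfl⟩, ⟨b', hy⟩⟩ h
    | Sum.inr b =>
      right
      intro y hy
      match y with
      | Sum.inl a' => exact absurd ⟨⟨a', hy⟩, ⟨b, rfl⟩⟩ h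
      | Sum.inr b' => exact ⟨b', rfl⟩
  · rintro (h | h) ⟨⟨a, ha⟩, ⟨b, hb⟩⟩
    · obtain ⟨b', hb'⟩ := h _ hb; simp at hb'
    · obtain ⟨a', ha'⟩ := h _ ha; simp at ha'

lemma up_lo_disjoint (p : PP k l) (c : Quotient p) : ¬ (upC p c ∧ loC p c) := by
  rintro ⟨hu, hl⟩
  obtain ⟨x, rfl⟩ := Quotient.exists_rep c
  obtain ⟨a, ha⟩ := hu x rfl
  obtain ⟨b, hb⟩ := hl x rfl
  rw [ha] at hb; simp at hb

lemma bP_split (p : PP k l) : bP p = tP p + (UPn p + DPn p) := by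
  classical
  have h1 : Nat.card (Quotient p) =
      Nat.card {c : Quotient p // thruC p c} + Nat.card {c : Quotient p // ¬ thruC p c} := by
    rw [← Nat.card_sum]
    exact Nat.card_congr (Equiv.sumCompl (thruC p)).symm
  have h2 : Nat.card {c : Quotient p // ¬ thruC p c} = UPn p + DPn p := by
    have e1 : {c : Quotient p // ¬ thruC p c} ≃ {c : Quotient p // upC p c ∨ loC p c} :=
      Equiv.subtypeEquivRight (fun c => trichotomy p c)
    have e2 : {c : Quotient p // upC p c ∨ loC p c} ≃
        {c : Quotient p // upC p c} ⊕ {c : Quotient p // loC p c} :=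
      subtypeOrEquiv _ _ (by
        rw [Pi.disjoint_iff]
        intro c
        rw [Prop.disjoint_iff]
        exact up_lo_disjoint p c)
    rw [Nat.card_congr (e1.trans e2), Nat.card_sum, UPn, DPn]
  rw [bP, h1, h2, tP_def]

lemma betaP_eq (p : PP k l) : betaP p = UPn p + DPn p := by
  have := bP_split p
  rw [betaP]
  omega

end GammaVanishingAux
namespace GammaVanishingAux

variable {k l : ℕ}

lemma rsymm {α : Type*} {s : Setoid α} {x y : α} (h : s.r x y) : s.r y x := s.iseqv.symm h
lemma rtrans {α : Type*} {s : Setoid α} {x y z : α} (h : s.r x y) (h' : s.r y z) : s.r x z :=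
  s.iseqv.trans h h'
lemma rrefl {α : Type*} (s : Setoid α) (x : α) : s.r x x := s.iseqv.refl x

lemma swap_rel (p : PP k l) (x y : Fin l ⊕ Fin k) :
    (swapP p).r x y ↔ p.r (Sum.swap x) (Sum.swap y) := Iff.rfl

lemma swapP_swapP (p : PP k l) : swapP (swapP p) = p := by
  apply Setoid.ext
  intro a b
  change p.r (Sum.swap (Sum.swap a)) (Sum.swap (Sum.swap b)) ↔ p.r a b
  rw [Sum.swap_swap, Sum.swap_swap]

lemma bP_swap (p : PP k l) : bP (swapP p) = bP p :=
  Nat.card_congr (Quotient.congr (Equiv.sumComm (Fin l) (Fin k)) (fun _ _ => Iff.rfl))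

lemma UPn_swap (p : PP k l) : UPn (swapP p) = DPn p := by
  apply card_common
    (f := fun (j : {j : Fin l // ∀ a : Fin k, ¬ p.r (Sum.inl a) (Sum.inr j)}) =>
      (⟨Quotient.mk (swapP p) (Sum.inl j.1), by
        intro x hx
        match x with
        | Sum.inl j' => exact ⟨j', rfl⟩
        | Sum.inr a =>
          rw [mkq_eq] at hx
          have hx' : p.r (Sum.inl a) (Sum.inr j.1) := hx
          exact absurd hx' (j.2 a)⟩ : {c : Quotient (swapP p) // upC (swapP p) c}))
    (g := fun j => (⟨Quotient.mk p (Sum.inr j.1), by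
        intro x hx
        match x with
        | Sum.inr b => exact ⟨b, rfl⟩
        | Sum.inl a => rw [mkq_eq] at hx; exact absurd hx (j.2 a)⟩ :
          {c : Quotient p // loC p c}))
  · rintro ⟨c, hc⟩
    obtain ⟨x, rfl⟩ := Quotient.exists_rep c
    obtain ⟨j, rfl⟩ := hc x rfl
    refine ⟨⟨j, fun a ha => ?_⟩, rfl⟩
    have ha' : (swapP p).r (Sum.inr a) (Sum.inl j) := ha
    obtain ⟨j', hj'⟩ := hc _ (mkq_eq.2 ha')
    simp at hj'
  · rintro ⟨c, hc⟩
    obtain ⟨x, rfl⟩ := Quotient.exists_rep c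
    obtain ⟨j, rfl⟩ := hc x rfl
    refine ⟨⟨j, fun a ha => ?_⟩, rfl⟩
    obtain ⟨j', hj'⟩ := hc _ (mkq_eq.2 ha)
    simp at hj'
  · intro i j
    refine (Subtype.mk_eq_mk.trans mkq_eq).trans (Iff.trans ?_ (Subtype.mk_eq_mk.trans mkq_eq).symm)
    exact Iff.rfl

lemma DPn_swap (p : PP k l) : DPn (swapP p) = UPn p := by
  apply card_common
    (f := fun (a : {a : Fin k // ∀ j : Fin l, ¬ p.r (Sum.inl a) (Sum.inr j)}) =>
      (⟨Quotient.mk (swapP p) (Sum.inr a.1), by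
        intro x hx
        match x with
        | Sum.inr a' => exact ⟨a', rfl⟩
        | Sum.inl j =>
          rw [mkq_eq] at hx
          have hx' : p.r (Sum.inr j) (Sum.inl a.1) := hx
          exact absurd (rsymm hx') (a.2 j)⟩ :
          {c : Quotient (swapP p) // loC (swapP p) c}))
    (g := fun a => (⟨Quotient.mk p (Sum.inl a.1), by
        intro x hx
        match x with
        | Sum.inl a' => exact ⟨a', rfl⟩
        | Sum.inr j => rw [mkq_eq] at hx; exact absurd (rsymm hx) (a.2 j)⟩ :
          {c : Quotient p // upC p c}))
  · rintro ⟨c, hc⟩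
    obtain ⟨x, rfl⟩ := Quotient.exists_rep c
    obtain ⟨a, rfl⟩ := hc x rfl
    refine ⟨⟨a, fun j hj => ?_⟩, rfl⟩
    have hj' : (swapP p).r (Sum.inl j) (Sum.inr a) := rsymm (x := Sum.inl a) (y := Sum.inr j) hj
    obtain ⟨a', ha'⟩ := hc _ (mkq_eq.2 hj')
    simp at ha'
  · rintro ⟨c, hc⟩
    obtain ⟨x, rfl⟩ := Quotient.exists_rep c
    obtain ⟨a, rfl⟩ := hc x rfl
    refine ⟨⟨a, fun j hj => ?_⟩, rfl⟩
    obtain ⟨a', ha'⟩ := hc _ (mkq_eq.2 (rsymm hj))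
    simp at ha'
  · intro i j
    refine (Subtype.mk_eq_mk.trans mkq_eq).trans (Iff.trans ?_ (Subtype.mk_eq_mk.trans mkq_eq).symm)
    exact Iff.rfl

lemma betaP_swap (p : PP k l) : betaP (swapP p) = betaP p := by
  rw [betaP_eq, betaP_eq, UPn_swap, DPn_swap]
  omega

end GammaVanishingAux
namespace GammaVanishingAux

open Relation

variable {k l m : ℕ}

lemma midRel_symm {P : PP k l} {Q : PP l m} {x y} (h : midRel P Q x y) : midRel P Q y x := by
  rcases h with ⟨u, v, huv, hx, hy⟩ | ⟨u, v, huv, hx, hy⟩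
  · exact Or.inl ⟨v, u, rsymm huv, hy, hx⟩
  · exact Or.inr ⟨v, u, rsymm huv, hy, hx⟩

lemma bigS_rel {P : PP k l} {Q : PP l m} {x y} :
    (bigS P Q).r x y ↔ Relation.EqvGen (midRel P Q) x y := Iff.rfl

lemma class_inv {P : PP k l} {Q : PP l m} (G : (Fin k ⊕ (Fin l ⊕ Fin m)) → Prop)
    (haux : ∀ x y, midRel P Q x y → G x → G y)
    {x y} (h : (bigS P Q).r x y) (hx : G x) : G y :=
  (eqvGen_inv G (fun a b hab => ⟨haux a b hab, haux b a (midRel_symm hab)⟩) h).1 hx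

section ConfigI

variable (p : PP k l)

/-- Edge: left `j` — mid `a`. -/
lemma I_e1 {j a} (h : p.r (Sum.inr j) (Sum.inl a)) :
    (bigS (swapP p) p).r (Sum.inl j) (Sum.inr (Sum.inl a)) :=
  EqvGen.rel _ _ (Or.inl ⟨Sum.inl j, Sum.inr a, h, rfl, rfl⟩)

/-- Edge: mid `a` — mid `a'`. -/
lemma I_e2 {a a'} (h : p.r (Sum.inl a) (Sum.inl a')) :
    (bigS (swapP p) p).r (Sum.inr (Sum.inl a)) (Sum.inr (Sum.inl a')) :=
  EqvGen.rel _ _ (Or.inl ⟨Sum.inr a, Sum.inr a', h, rfl, rfl⟩)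

/-- Edge: left `j` — left `j'`. -/
lemma I_e3 {j j'} (h : p.r (Sum.inr j) (Sum.inr j')) :
    (bigS (swapP p) p).r (Sum.inl j) (Sum.inl j') :=
  EqvGen.rel _ _ (Or.inl ⟨Sum.inl j, Sum.inl j', h, rfl, rfl⟩)

/-- Edge: mid `a` — right `j`. -/
lemma I_e4 {a j} (h : p.r (Sum.inl a) (Sum.inr j)) :
    (bigS (swapP p) p).r (Sum.inr (Sum.inl a)) (Sum.inr (Sum.inr j)) :=
  EqvGen.rel _ _ (Or.inr ⟨Sum.inl a, Sum.inr j, h, rfl, rfl⟩)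

/-- Edge: right `j` — right `j'`. -/
lemma I_e5 {j j'} (h : p.r (Sum.inr j) (Sum.inr j')) :
    (bigS (swapP p) p).r (Sum.inr (Sum.inr j)) (Sum.inr (Sum.inr j')) :=
  EqvGen.rel _ _ (Or.inr ⟨Sum.inr j, Sum.inr j', h, rfl, rfl⟩)

def piI : Fin l ⊕ (Fin k ⊕ Fin l) → Fin k ⊕ Fin l :=
  Sum.elim Sum.inr (Sum.elim Sum.inl Sum.inr)

lemma I_lift {x y} (h : (bigS (swapP p) p).r x y) : p.r (piI x) (piI y) := by
  refine eqvGen_lift p piI ?_ h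
  rintro z z' (⟨u, v, huv, rfl, rfl⟩ | ⟨u, v, huv, rfl, rfl⟩)
  · cases u <;> cases v <;> exact huv
  · cases u <;> cases v <;> exact huv

lemma I_mid_class {a} (hU : ∀ j, ¬ p.r (Sum.inl a) (Sum.inr j)) {z}
    (h : (bigS (swapP p) p).r (Sum.inr (Sum.inl a)) z) :
    ∃ a', z = Sum.inr (Sum.inl a') ∧ p.r (Sum.inl a) (Sum.inl a') := by
  refine class_inv
    (fun z => ∃ a', z = Sum.inr (Sum.inl a') ∧ p.r (Sum.inl a) (Sum.inl a'))
    ?_ h ⟨a, rfl, rrefl p _⟩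
  rintro x y (⟨u, v, huv, rfl, rfl⟩ | ⟨u, v, huv, rfl, rfl⟩) ⟨a', hx, ha'⟩
  · match u, hx with
    | Sum.inr c, hx =>
      obtain rfl : c = a' := by simpa using hx
      match v with
      | Sum.inl j => exact absurd (rtrans ha' huv) (hU j)
      | Sum.inr c' => exact ⟨c', rfl, rtrans ha' huv⟩
  · match u, hx with
    | Sum.inl c, hx =>
      obtain rfl : c = a' := by simpa using hx
      match v with
      | Sum.inl c' => exact ⟨c', rfl, rtrans ha' huv⟩
      | Sum.inr j => exact absurd (rtrans ha' huv) (hU j)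

lemma I_lft_class {j} (hT : ∀ a, ¬ p.r (Sum.inr j) (Sum.inl a)) {z}
    (h : (bigS (swapP p) p).r (Sum.inl j) z) :
    ∃ j', z = Sum.inl j' ∧ p.r (Sum.inr j) (Sum.inr j') := by
  refine class_inv
    (fun z => ∃ j', z = Sum.inl j' ∧ p.r (Sum.inr j) (Sum.inr j'))
    ?_ h ⟨j, rfl, rrefl p _⟩
  rintro x y (⟨u, v, huv, rfl, rfl⟩ | ⟨u, v, huv, rfl, rfl⟩) ⟨j', hx, hj'⟩
  · match u, hx with
    | Sum.inl c, hx =>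
      obtain rfl : c = j' := by simpa using hx
      match v with
      | Sum.inl c' => exact ⟨c', rfl, rtrans hj' huv⟩
      | Sum.inr a => exact absurd (rtrans hj' huv) (hT a)
  · match u, hx with
    | Sum.inl c, hx => simp at hx
    | Sum.inr c, hx => simp at hx

lemma I_rgt_class {j} (hT : ∀ a, ¬ p.r (Sum.inr j) (Sum.inl a)) {z}
    (h : (bigS (swapP p) p).r (Sum.inr (Sum.inr j)) z) :
    ∃ j', z = Sum.inr (Sum.inr j') ∧ p.r (Sum.inr j) (Sum.inr j') := by
  refine class_inv
    (fun z => ∃ j', z = Sum.inr (Sum.inr j') ∧ p.r (Sum.inr j) (Sum.inr j'))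
    ?_ h ⟨j, rfl, rrefl p _⟩
  rintro x y (⟨u, v, huv, rfl, rfl⟩ | ⟨u, v, huv, rfl, rfl⟩) ⟨j', hx, hj'⟩
  · match u, hx with
    | Sum.inl c, hx => simp at hx
    | Sum.inr c, hx => simp at hx
  · match u, hx with
    | Sum.inr c, hx =>
      obtain rfl : c = j' := by simpa using hx
      match v with
      | Sum.inr c' => exact ⟨c', rfl, rtrans hj' huv⟩
      | Sum.inl a => exact absurd (rtrans hj' huv) (hT a)

lemma I_rl : rlP p (swapP p) = UPn p := by
  unfold rlP UPn
  apply card_common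
    (f := fun (a : {a : Fin k // ∀ j : Fin l, ¬ p.r (Sum.inl a) (Sum.inr j)}) =>
      (⟨Quotient.mk (bigS (swapP p) p) (Sum.inr (Sum.inl a.1)), by
        intro x hx
        rw [mkq_eq] at hx
        obtain ⟨a', ha', -⟩ := I_mid_class p a.2 (rsymm hx)
        exact ⟨a', ha'⟩⟩))
    (g := fun a => (⟨Quotient.mk p (Sum.inl a.1), by
        intro x hx
        match x with
        | Sum.inl a' => exact ⟨a', rfl⟩
        | Sum.inr j => rw [mkq_eq] at hx; exact absurd (rsymm hx) (a.2 j)⟩ :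
          {c : Quotient p // upC p c}))
  · rintro ⟨c, hc⟩
    obtain ⟨x, rfl⟩ := Quotient.exists_rep c
    obtain ⟨a, rfl⟩ := hc x rfl
    refine ⟨⟨a, fun j hj => ?_⟩, rfl⟩
    obtain ⟨b, hb⟩ := hc _ (mkq_eq.2 (rsymm (I_e4 p hj)))
    simp at hb
  · rintro ⟨c, hc⟩
    obtain ⟨x, rfl⟩ := Quotient.exists_rep c
    obtain ⟨a, rfl⟩ := hc x rfl
    refine ⟨⟨a, fun j hj => ?_⟩, rfl⟩
    obtain ⟨a', ha'⟩ := hc _ (mkq_eq.2 (rsymm hj))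
    simp at ha'
  · intro i j
    refine (Subtype.mk_eq_mk.trans mkq_eq).trans (Iff.trans ?_ (Subtype.mk_eq_mk.trans mkq_eq).symm)
    exact ⟨fun h => I_lift p h, fun h => I_e2 p h⟩

lemma I_UP : UPn (compP p (swapP p)) = DPn p := by
  unfold UPn DPn
  apply card_common
    (f := fun (j : {j : Fin l // ∀ a : Fin k, ¬ p.r (Sum.inr j) (Sum.inl a)}) =>
      (⟨Quotient.mk (compP p (swapP p)) (Sum.inl j.1), by
        intro x hx
        match x with
        | Sum.inl j' => exact ⟨j', rfl⟩
        | Sum.inr b =>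
          rw [mkq_eq] at hx
          have hx' : (bigS (swapP p) p).r (Sum.inr (Sum.inr b)) (Sum.inl j.1) := hx
          obtain ⟨j', hj', -⟩ := I_lft_class p j.2 (rsymm hx')
          simp at hj'⟩))
    (g := fun j => (⟨Quotient.mk p (Sum.inr j.1), by
        intro x hx
        match x with
        | Sum.inr b => exact ⟨b, rfl⟩
        | Sum.inl a => rw [mkq_eq] at hx; exact absurd (rsymm hx) (j.2 a)⟩ :
          {c : Quotient p // loC p c}))
  · rintro ⟨c, hc⟩
    obtain ⟨x, rfl⟩ := Quotient.exists_rep c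
    obtain ⟨j, rfl⟩ := hc x rfl
    refine ⟨⟨j, fun a ha => ?_⟩, rfl⟩
    have hchain : (bigS (swapP p) p).r (Sum.inl j) (Sum.inr (Sum.inr j)) :=
      rtrans (I_e1 p ha) (I_e4 p (rsymm ha))
    have : Quotient.mk (compP p (swapP p)) (Sum.inr j) = Quotient.mk _ (Sum.inl j) :=
      mkq_eq.2 (rsymm hchain)
    obtain ⟨j', hj'⟩ := hc _ this
    simp at hj'
  · rintro ⟨c, hc⟩
    obtain ⟨x, rfl⟩ := Quotient.exists_rep c
    obtain ⟨j, rfl⟩ := hc x rfl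
    refine ⟨⟨j, fun a ha => ?_⟩, rfl⟩
    obtain ⟨j', hj'⟩ := hc _ (mkq_eq.2 (rsymm ha))
    simp at hj'
  · intro i j
    refine (Subtype.mk_eq_mk.trans mkq_eq).trans (Iff.trans ?_ (Subtype.mk_eq_mk.trans mkq_eq).symm)
    exact ⟨fun h => I_lift p (show (bigS (swapP p) p).r (Sum.inl i.1) (Sum.inl j.1) from h),
      fun h => I_e3 p h⟩

lemma I_DP : DPn (compP p (swapP p)) = DPn p := by
  unfold DPn
  apply card_common
    (f := fun (j : {j : Fin l // ∀ a : Fin k, ¬ p.r (Sum.inr j) (Sum.inl a)}) =>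
      (⟨Quotient.mk (compP p (swapP p)) (Sum.inr j.1), by
        intro x hx
        match x with
        | Sum.inr j' => exact ⟨j', rfl⟩
        | Sum.inl b =>
          rw [mkq_eq] at hx
          have hx' : (bigS (swapP p) p).r (Sum.inl b) (Sum.inr (Sum.inr j.1)) := hx
          obtain ⟨j', hj', -⟩ := I_rgt_class p j.2 (rsymm hx')
          simp at hj'⟩))
    (g := fun j => (⟨Quotient.mk p (Sum.inr j.1), by
        intro x hx
        match x with
        | Sum.inr b => exact ⟨b, rfl⟩
        | Sum.inl a => rw [mkq_eq] at hx; exact absurd (rsymm hx) (j.2 a)⟩ :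
          {c : Quotient p // loC p c}))
  · rintro ⟨c, hc⟩
    obtain ⟨x, rfl⟩ := Quotient.exists_rep c
    obtain ⟨j, rfl⟩ := hc x rfl
    refine ⟨⟨j, fun a ha => ?_⟩, rfl⟩
    have hchain : (bigS (swapP p) p).r (Sum.inl j) (Sum.inr (Sum.inr j)) :=
      rtrans (I_e1 p ha) (I_e4 p (rsymm ha))
    have : Quotient.mk (compP p (swapP p)) (Sum.inl j) = Quotient.mk _ (Sum.inr j) :=
      mkq_eq.2 hchain
    obtain ⟨j', hj'⟩ := hc _ this
    simp at hj'
  · rintro ⟨c, hc⟩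
    obtain ⟨x, rfl⟩ := Quotient.exists_rep c
    obtain ⟨j, rfl⟩ := hc x rfl
    refine ⟨⟨j, fun a ha => ?_⟩, rfl⟩
    obtain ⟨j', hj'⟩ := hc _ (mkq_eq.2 (rsymm ha))
    simp at hj'
  · intro i j
    refine (Subtype.mk_eq_mk.trans mkq_eq).trans (Iff.trans ?_ (Subtype.mk_eq_mk.trans mkq_eq).symm)
    exact ⟨fun h => I_lift p
        (show (bigS (swapP p) p).r (Sum.inr (Sum.inr i.1)) (Sum.inr (Sum.inr j.1)) from h),
      fun h => I_e5 p h⟩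

lemma I_beta : betaP (compP p (swapP p)) = 2 * DPn p := by
  rw [betaP_eq, I_UP, I_DP]
  ring

lemma stmt1a : gammaP p (swapP p) = 0 := by
  unfold gammaP
  rw [I_rl, betaP_swap, I_beta, betaP_eq]
  push_cast
  ring

end ConfigI

end GammaVanishingAux
namespace GammaVanishingAux

open Relation

variable {k l : ℕ} (p : PP k l)

section ConfigII

lemma II_e1 {a a'} (h : p.r (Sum.inl a) (Sum.inl a')) :
    (bigS p (swapP p)).r (Sum.inl a) (Sum.inl a') :=
  EqvGen.rel _ _ (Or.inl ⟨Sum.inl a, Sum.inl a', h, rfl, rfl⟩)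

lemma II_e2 {a j} (h : p.r (Sum.inl a) (Sum.inr j)) :
    (bigS p (swapP p)).r (Sum.inl a) (Sum.inr (Sum.inl j)) :=
  EqvGen.rel _ _ (Or.inl ⟨Sum.inl a, Sum.inr j, h, rfl, rfl⟩)

lemma II_e3 {j j'} (h : p.r (Sum.inr j) (Sum.inr j')) :
    (bigS p (swapP p)).r (Sum.inr (Sum.inl j)) (Sum.inr (Sum.inl j')) :=
  EqvGen.rel _ _ (Or.inl ⟨Sum.inr j, Sum.inr j', h, rfl, rfl⟩)

lemma II_e4 {j a} (h : p.r (Sum.inr j) (Sum.inl a)) :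
    (bigS p (swapP p)).r (Sum.inr (Sum.inl j)) (Sum.inr (Sum.inr a)) :=
  EqvGen.rel _ _ (Or.inr ⟨Sum.inl j, Sum.inr a, h, rfl, rfl⟩)

lemma II_e5 {a a'} (h : p.r (Sum.inl a) (Sum.inl a')) :
    (bigS p (swapP p)).r (Sum.inr (Sum.inr a)) (Sum.inr (Sum.inr a')) :=
  EqvGen.rel _ _ (Or.inr ⟨Sum.inr a, Sum.inr a', h, rfl, rfl⟩)

def piII : Fin k ⊕ (Fin l ⊕ Fin k) → Fin k ⊕ Fin l :=
  Sum.elim Sum.inl (Sum.elim Sum.inr Sum.inl)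

lemma II_lift {x y} (h : (bigS p (swapP p)).r x y) : p.r (piII x) (piII y) := by
  refine eqvGen_lift p piII ?_ h
  rintro z z' (⟨u, v, huv, rfl, rfl⟩ | ⟨u, v, huv, rfl, rfl⟩)
  · cases u <;> cases v <;> exact huv
  · cases u <;> cases v <;> exact huv

lemma II_top_class {a} (hU : ∀ j, ¬ p.r (Sum.inl a) (Sum.inr j)) {z}
    (h : (bigS p (swapP p)).r (Sum.inl a) z) :
    ∃ a', z = Sum.inl a' ∧ p.r (Sum.inl a) (Sum.inl a') := by
  refine class_inv
    (fun z => ∃ a', z = Sum.inl a' ∧ p.r (Sum.inl a) (Sum.inl a'))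
    ?_ h ⟨a, rfl, rrefl p _⟩
  rintro x y (⟨u, v, huv, rfl, rfl⟩ | ⟨u, v, huv, rfl, rfl⟩) ⟨a', hx, ha'⟩
  · match u, hx with
    | Sum.inl c, hx =>
      obtain rfl : c = a' := by simpa using hx
      match v with
      | Sum.inl c' => exact ⟨c', rfl, rtrans ha' huv⟩
      | Sum.inr j => exact absurd (rtrans ha' huv) (hU j)
  · match u, hx with
    | Sum.inl c, hx => simp at hx
    | Sum.inr c, hx => simp at hx

lemma r_ll {a a'} :
    (compP (swapP p) p).r (Sum.inl a) (Sum.inl a') ↔ p.r (Sum.inl a) (Sum.inl a') :=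
  ⟨fun h => II_lift p h, fun h => II_e1 p h⟩

lemma r_rr {a a'} :
    (compP (swapP p) p).r (Sum.inr a) (Sum.inr a') ↔ p.r (Sum.inl a) (Sum.inl a') :=
  ⟨fun h => II_lift p
      (show (bigS p (swapP p)).r (Sum.inr (Sum.inr a)) (Sum.inr (Sum.inr a')) from h),
    fun h => II_e5 p h⟩

lemma r_lr {a a'} :
    (compP (swapP p) p).r (Sum.inl a) (Sum.inr a') ↔
      p.r (Sum.inl a) (Sum.inl a') ∧ ∃ j, p.r (Sum.inl a) (Sum.inr j) := by
  constructor
  · intro h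
    have h' : (bigS p (swapP p)).r (Sum.inl a) (Sum.inr (Sum.inr a')) := h
    refine ⟨II_lift p h', ?_⟩
    by_contra hn
    push_neg at hn
    obtain ⟨a'', ha'', -⟩ := II_top_class p hn h'
    simp at ha''
  · rintro ⟨hpp, j, hj⟩
    have h1 : (bigS p (swapP p)).r (Sum.inl a) (Sum.inr (Sum.inl j)) := II_e2 p hj
    have h2 : (bigS p (swapP p)).r (Sum.inr (Sum.inl j)) (Sum.inr (Sum.inr a')) :=
      II_e4 p (rtrans (rsymm hj) hpp)
    have h3 : (bigS p (swapP p)).r (Sum.inl a) (Sum.inr (Sum.inr a')) := rtrans h1 h2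
    exact h3

lemma r_rl {a a'} :
    (compP (swapP p) p).r (Sum.inr a) (Sum.inl a') ↔
      p.r (Sum.inl a) (Sum.inl a') ∧ ∃ j, p.r (Sum.inl a) (Sum.inr j) := by
  constructor
  · intro h
    obtain ⟨h1, j, hj⟩ := (r_lr p).1 (rsymm h)
    exact ⟨rsymm h1, j, rtrans (rsymm h1) hj⟩
  · rintro ⟨hpp, j, hj⟩
    exact rsymm ((r_lr p).2 ⟨rsymm hpp, j, rtrans (rsymm hpp) hj⟩)

end ConfigII

section ConfigIII

lemma III_g1 {a a'} (h : p.r (Sum.inl a) (Sum.inl a')) :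
    (bigS (compP (swapP p) p) p).r (Sum.inl a) (Sum.inl a') :=
  EqvGen.rel _ _ (Or.inl ⟨Sum.inl a, Sum.inl a', (r_ll p).2 h, rfl, rfl⟩)

lemma III_g2 {a a'} (h : p.r (Sum.inl a) (Sum.inl a')) :
    (bigS (compP (swapP p) p) p).r (Sum.inr (Sum.inl a)) (Sum.inr (Sum.inl a')) :=
  EqvGen.rel _ _ (Or.inl ⟨Sum.inr a, Sum.inr a', (r_rr p).2 h, rfl, rfl⟩)

lemma III_g3 {a a'} (h : p.r (Sum.inl a) (Sum.inl a')) (h' : ∃ j, p.r (Sum.inl a) (Sum.inr j)) :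
    (bigS (compP (swapP p) p) p).r (Sum.inl a) (Sum.inr (Sum.inl a')) :=
  EqvGen.rel _ _ (Or.inl ⟨Sum.inl a, Sum.inr a', (r_lr p).2 ⟨h, h'⟩, rfl, rfl⟩)

lemma III_g4 {a j} (h : p.r (Sum.inl a) (Sum.inr j)) :
    (bigS (compP (swapP p) p) p).r (Sum.inr (Sum.inl a)) (Sum.inr (Sum.inr j)) :=
  EqvGen.rel _ _ (Or.inr ⟨Sum.inl a, Sum.inr j, h, rfl, rfl⟩)

lemma III_g5 {j j'} (h : p.r (Sum.inr j) (Sum.inr j')) :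
    (bigS (compP (swapP p) p) p).r (Sum.inr (Sum.inr j)) (Sum.inr (Sum.inr j')) :=
  EqvGen.rel _ _ (Or.inr ⟨Sum.inr j, Sum.inr j', h, rfl, rfl⟩)

def piIII : Fin k ⊕ (Fin k ⊕ Fin l) → Fin k ⊕ Fin l :=
  Sum.elim Sum.inl (Sum.elim Sum.inl Sum.inr)

lemma III_lift {x y} (h : (bigS (compP (swapP p) p) p).r x y) : p.r (piIII x) (piIII y) := by
  refine eqvGen_lift p piIII ?_ h
  rintro z z' (⟨u, v, huv, rfl, rfl⟩ | ⟨u, v, huv, rfl, rfl⟩)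
  · match u, v, huv with
    | Sum.inl a, Sum.inl a', huv => exact (r_ll p).1 huv
    | Sum.inl a, Sum.inr a', huv => exact ((r_lr p).1 huv).1
    | Sum.inr a, Sum.inl a', huv => exact ((r_rl p).1 huv).1
    | Sum.inr a, Sum.inr a', huv => exact (r_rr p).1 huv
  · cases u <;> cases v <;> exact huv

lemma III_mid_class {a} (hU : ∀ j, ¬ p.r (Sum.inl a) (Sum.inr j)) {z}
    (h : (bigS (compP (swapP p) p) p).r (Sum.inr (Sum.inl a)) z) :
    ∃ a', z = Sum.inr (Sum.inl a') ∧ p.r (Sum.inl a) (Sum.inl a') := by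
  refine class_inv
    (fun z => ∃ a', z = Sum.inr (Sum.inl a') ∧ p.r (Sum.inl a) (Sum.inl a'))
    ?_ h ⟨a, rfl, rrefl p _⟩
  rintro x y (⟨u, v, huv, rfl, rfl⟩ | ⟨u, v, huv, rfl, rfl⟩) ⟨a', hx, ha'⟩
  · match u, hx with
    | Sum.inr c, hx =>
      obtain rfl : c = a' := by simpa using hx
      match v with
      | Sum.inl a'' =>
        obtain ⟨h1, j, hj⟩ := (r_rl p).1 huv
        exact absurd (rtrans ha' hj) (hU j)
      | Sum.inr a'' => exact ⟨a'', rfl, rtrans ha' ((r_rr p).1 huv)⟩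
  · match u, hx with
    | Sum.inl c, hx =>
      obtain rfl : c = a' := by simpa using hx
      match v with
      | Sum.inl c' => exact ⟨c', rfl, rtrans ha' huv⟩
      | Sum.inr j => exact absurd (rtrans ha' huv) (hU j)

lemma III_rl : rlP p (compP (swapP p) p) = UPn p := by
  unfold rlP UPn
  apply card_common
    (f := fun (a : {a : Fin k // ∀ j : Fin l, ¬ p.r (Sum.inl a) (Sum.inr j)}) =>
      (⟨Quotient.mk (bigS (compP (swapP p) p) p) (Sum.inr (Sum.inl a.1)), by
        intro x hx
        rw [mkq_eq] at hx
        obtain ⟨a', ha', -⟩ := III_mid_class p a.2 (rsymm hx)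
        exact ⟨a', ha'⟩⟩))
    (g := fun a => (⟨Quotient.mk p (Sum.inl a.1), by
        intro x hx
        match x with
        | Sum.inl a' => exact ⟨a', rfl⟩
        | Sum.inr j => rw [mkq_eq] at hx; exact absurd (rsymm hx) (a.2 j)⟩ :
          {c : Quotient p // upC p c}))
  · rintro ⟨c, hc⟩
    obtain ⟨x, rfl⟩ := Quotient.exists_rep c
    obtain ⟨a, rfl⟩ := hc x rfl
    refine ⟨⟨a, fun j hj => ?_⟩, rfl⟩
    obtain ⟨b, hb⟩ := hc _ (mkq_eq.2 (rsymm (III_g4 p hj)))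
    simp at hb
  · rintro ⟨c, hc⟩
    obtain ⟨x, rfl⟩ := Quotient.exists_rep c
    obtain ⟨a, rfl⟩ := hc x rfl
    refine ⟨⟨a, fun j hj => ?_⟩, rfl⟩
    obtain ⟨a', ha'⟩ := hc _ (mkq_eq.2 (rsymm hj))
    simp at ha'
  · intro i j
    refine (Subtype.mk_eq_mk.trans mkq_eq).trans (Iff.trans ?_ (Subtype.mk_eq_mk.trans mkq_eq).symm)
    exact ⟨fun h => III_lift p h, fun h => III_g2 p h⟩

lemma III_comp : compP p (compP (swapP p) p) = p := by
  apply Setoid.ext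
  intro x y
  constructor
  · intro h
    have h' : (bigS (compP (swapP p) p) p).r (Sum.map id Sum.inr x) (Sum.map id Sum.inr y) := h
    have := III_lift p h'
    match x, y with
    | Sum.inl a, Sum.inl a' => exact this
    | Sum.inl a, Sum.inr j => exact this
    | Sum.inr j, Sum.inl a => exact this
    | Sum.inr j, Sum.inr j' => exact this
  · intro h
    match x, y with
    | Sum.inl a, Sum.inl a' => exact III_g1 p h
    | Sum.inl a, Sum.inr j =>
      have h3 : (bigS (compP (swapP p) p) p).r (Sum.inl a) (Sum.inr (Sum.inr j)) :=
        rtrans (III_g3 p (rrefl p _) ⟨j, h⟩) (III_g4 p h)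
      exact h3
    | Sum.inr j, Sum.inl a =>
      have h3 : (bigS (compP (swapP p) p) p).r (Sum.inl a) (Sum.inr (Sum.inr j)) :=
        rtrans (III_g3 p (rrefl p _) ⟨j, rsymm h⟩) (III_g4 p (rsymm h))
      exact rsymm h3
    | Sum.inr j, Sum.inr j' => exact III_g5 p h

lemma II_beta : betaP (compP (swapP p) p) = 2 * UPn p := by
  have h := I_beta (swapP p)
  rw [swapP_swapP, DPn_swap] at h
  exact h

lemma stmt1b : gammaP p (compP (swapP p) p) = 0 := by
  unfold gammaP
  rw [III_rl, III_comp, II_beta, betaP_eq]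
  push_cast
  ring

end ConfigIII

end GammaVanishingAux
namespace GammaVanishingAux

open Relation

variable {k l m : ℕ}

/-- Generic upper edge of `bigS`. -/
lemma bigS_top {P : PP k l} {Q : PP l m} {u v : Fin k ⊕ Fin l} (h : P.r u v) :
    (bigS P Q).r (Sum.map id Sum.inl u) (Sum.map id Sum.inl v) :=
  EqvGen.rel _ _ (Or.inl ⟨u, v, h, rfl, rfl⟩)

/-- Generic lower edge of `bigS`. -/
lemma bigS_bot {P : PP k l} {Q : PP l m} {u v : Fin l ⊕ Fin m} (h : Q.r u v) :
    (bigS P Q).r (Sum.inr u) (Sum.inr v) :=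
  EqvGen.rel _ _ (Or.inr ⟨u, v, h, rfl, rfl⟩)

section Projective

variable {p q : PP k k}

lemma sswap (hs : swapP p = p) {x y} (h : p.r x y) : p.r (Sum.swap x) (Sum.swap y) := by
  rw [← hs] at h
  exact h

lemma projThru (hs : swapP p = p) (hc : compP p p = p) {a b : Fin k}
    (h : p.r (Sum.inl a) (Sum.inr b)) :
    p.r (Sum.inl a) (Sum.inr a) ∧ p.r (Sum.inl b) (Sum.inr b) ∧ p.r (Sum.inl a) (Sum.inl b) := by
  have hswap : p.r (Sum.inl b) (Sum.inr a) := rsymm (sswap hs h)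
  have c1 : (bigS p p).r (Sum.inl a) (Sum.inr (Sum.inl b)) :=
    bigS_top (u := Sum.inl a) (v := Sum.inr b) h
  have c2 : (bigS p p).r (Sum.inr (Sum.inl b)) (Sum.inr (Sum.inr a)) :=
    bigS_bot hswap
  have c1' : (bigS p p).r (Sum.inl b) (Sum.inr (Sum.inl a)) :=
    bigS_top (u := Sum.inl b) (v := Sum.inr a) hswap
  have c2' : (bigS p p).r (Sum.inr (Sum.inl a)) (Sum.inr (Sum.inr b)) :=
    bigS_bot h
  have ta : p.r (Sum.inl a) (Sum.inr a) := by
    have hh0 : (bigS p p).r (Sum.inl a) (Sum.inr (Sum.inr a)) := rtrans c1 c2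
    have hh : (compP p p).r (Sum.inl a) (Sum.inr a) := hh0
    rw [hc] at hh
    exact hh
  have tb : p.r (Sum.inl b) (Sum.inr b) := by
    have hh0 : (bigS p p).r (Sum.inl b) (Sum.inr (Sum.inr b)) := rtrans c1' c2'
    have hh : (compP p p).r (Sum.inl b) (Sum.inr b) := hh0
    rw [hc] at hh
    exact hh
  refine ⟨ta, tb, ?_⟩
  have c3 : (bigS p p).r (Sum.inl b) (Sum.inr (Sum.inl b)) :=
    bigS_top (u := Sum.inl b) (v := Sum.inr b) tb
  have hh0 : (bigS p p).r (Sum.inl a) (Sum.inl b) := rtrans c1 (rsymm c3)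
  have hh : (compP p p).r (Sum.inl a) (Sum.inl b) := hh0
  rw [hc] at hh
  exact hh

lemma ROWr (hpq : compP p q = q) {b b' : Fin k}
    (h : p.r (Sum.inr b) (Sum.inr b')) : q.r (Sum.inr b) (Sum.inr b') := by
  have hh : (compP p q).r (Sum.inr b) (Sum.inr b') :=
    bigS_bot (P := q) (Q := p) (u := Sum.inr b) (v := Sum.inr b') h
  rw [hpq] at hh
  exact hh

lemma ROWl (hps : swapP p = p) (hqs : swapP q = q) (hpq : compP p q = q) {a a' : Fin k}
    (h : p.r (Sum.inl a) (Sum.inl a')) : q.r (Sum.inl a) (Sum.inl a') := by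
  have h2 : p.r (Sum.inr a) (Sum.inr a') := sswap hps h
  have h3 := ROWr hpq h2
  have h4 : (swapP q).r (Sum.inl a) (Sum.inl a') := h3
  rw [hqs] at h4
  exact h4

lemma claimC (hps : swapP p = p) (hpp : compP p p = p) (hqs : swapP q = q)
    (hpq : compP p q = q) {c c' : Fin k} (hc : ¬ p.r (Sum.inl c) (Sum.inr c))
    (h : q.r (Sum.inl c) (Sum.inl c')) : p.r (Sum.inl c) (Sum.inl c') := by
  have h2 : q.r (Sum.inr c) (Sum.inr c') := sswap hqs h
  rw [← hpq] at h2
  have h3 : (bigS q p).r (Sum.inr (Sum.inr c)) (Sum.inr (Sum.inr c')) := h2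
  have key := class_inv (P := q) (Q := p)
    (fun z => ∃ d, z = Sum.inr (Sum.inr d) ∧ p.r (Sum.inr c) (Sum.inr d))
    ?_ h3 ⟨c, rfl, rrefl p _⟩
  · obtain ⟨d, hd1, hd2⟩ := key
    obtain rfl : c' = d := by simpa using hd1
    exact sswap hps hd2
  · rintro x y (⟨u, v, huv, rfl, rfl⟩ | ⟨u, v, huv, rfl, rfl⟩) ⟨d, hx, hd⟩
    · match u, hx with
      | Sum.inl e, hx => simp at hx
      | Sum.inr e, hx => simp at hx
    · match u, hx with
      | Sum.inr e, hx =>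
        obtain rfl : e = d := by simpa using hx
        match v with
        | Sum.inl e' =>
          have h5 : p.r (Sum.inl e') (Sum.inr e) := rsymm huv
          have h6 := (projThru hps hpp h5).2.1
          have h7 : p.r (Sum.inl e) (Sum.inr c) := rtrans h6 (rsymm hd)
          exact absurd (projThru hps hpp h7).2.1 hc
        | Sum.inr d' => exact ⟨d', rfl, rtrans hd huv⟩

lemma qthruP (hps : swapP p = p) (hpp : compP p p = p) (hqs : swapP q = q)
    (hqq : compP q q = q) (hpq : compP p q = q) {a : Fin k}
    (h : q.r (Sum.inl a) (Sum.inr a)) : p.r (Sum.inl a) (Sum.inr a) := by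
  by_contra hna
  rw [← hpq] at h
  have h3 : (bigS q p).r (Sum.inl a) (Sum.inr (Sum.inr a)) := h
  have key := class_inv (P := q) (Q := p)
    (fun z => (∃ a', z = Sum.inl a' ∧ q.r (Sum.inl a) (Sum.inl a')) ∨
      (∃ d, z = Sum.inr (Sum.inl d) ∧ q.r (Sum.inl a) (Sum.inr d)))
    ?_ h3 (Or.inl ⟨a, rfl, rrefl q _⟩)
  · rcases key with ⟨a', ha', -⟩ | ⟨d, hd, -⟩
    · simp at ha'
    · simp at hd
  · rintro x y (⟨u, v, huv, rfl, rfl⟩ | ⟨u, v, huv, rfl, rfl⟩) hx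
    · rcases hx with ⟨a', hx, hq'⟩ | ⟨d, hx, hq'⟩
      · match u, hx with
        | Sum.inl c, hx =>
          obtain rfl : c = a' := by simpa using hx
          match v with
          | Sum.inl a'' => exact Or.inl ⟨a'', rfl, rtrans hq' huv⟩
          | Sum.inr d => exact Or.inr ⟨d, rfl, rtrans hq' huv⟩
      · match u, hx with
        | Sum.inr c, hx =>
          obtain rfl : c = d := by simpa using hx
          match v with
          | Sum.inl a'' => exact Or.inl ⟨a'', rfl, rtrans hq' huv⟩
          | Sum.inr d' => exact Or.inr ⟨d', rfl, rtrans hq' huv⟩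
    · rcases hx with ⟨a', hx, hq'⟩ | ⟨d, hx, hq'⟩
      · simp at hx
      · match u, hx with
        | Sum.inl c, hx =>
          obtain rfl : c = d := by simpa using hx
          match v with
          | Sum.inl d' =>
            have h5 : p.r (Sum.inr c) (Sum.inr d') := sswap hps huv
            exact Or.inr ⟨d', rfl, rtrans hq' (ROWr hpq h5)⟩
          | Sum.inr e =>
            have h6 := (projThru hps hpp huv).1
            have h7 := (projThru hqs hqq hq').2.2
            have h8 := claimC hps hpp hqs hpq hna h7
            have h9 : p.r (Sum.inl a) (Sum.inr c) := rtrans h8 h6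
            exact absurd (projThru hps hpp h9).1 hna

lemma pprop (hps : swapP p = p) (hpp : compP p p = p) (hqs : swapP q = q)
    (hpq : compP p q = q) {a a' : Fin k} (h : q.r (Sum.inl a) (Sum.inl a'))
    (ha : p.r (Sum.inl a) (Sum.inr a)) : p.r (Sum.inl a') (Sum.inr a') := by
  by_contra hn
  have h1 := claimC hps hpp hqs hpq hn (rsymm h)
  have h2 : p.r (Sum.inl a') (Sum.inr a) := rtrans h1 ha
  exact hn (projThru hps hpp h2).1

lemma comp_qp (hps : swapP p = p) (hpp : compP p p = p) (hqs : swapP q = q)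
    (hqq : compP q q = q) (hpq : compP p q = q) : compP q p = q := by
  apply Setoid.ext
  intro x y
  constructor
  · intro h
    have h' : (bigS p q).r (Sum.map id Sum.inr x) (Sum.map id Sum.inr y) := h
    have key : q.r (Sum.elim Sum.inl (Sum.elim Sum.inl Sum.inr) (Sum.map id Sum.inr x))
        (Sum.elim Sum.inl (Sum.elim Sum.inl Sum.inr) (Sum.map id Sum.inr y)) := by
      refine eqvGen_lift q _ ?_ h'
      rintro z z' (⟨u, v, huv, rfl, rfl⟩ | ⟨u, v, huv, rfl, rfl⟩)
      · match u, v, huv with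
        | Sum.inl a, Sum.inl a', huv => exact ROWl hps hqs hpq huv
        | Sum.inl a, Sum.inr c, huv =>
          exact ROWl hps hqs hpq (projThru hps hpp huv).2.2
        | Sum.inr c, Sum.inl a, huv =>
          exact rsymm (ROWl hps hqs hpq (projThru hps hpp (rsymm huv)).2.2)
        | Sum.inr c, Sum.inr c', huv =>
          exact ROWl hps hqs hpq (sswap hps huv)
      · cases u <;> cases v <;> exact huv
    match x, y with
    | Sum.inl a, Sum.inl a' => exact key
    | Sum.inl a, Sum.inr b => exact key
    | Sum.inr b, Sum.inl a => exact key
    | Sum.inr b, Sum.inr b' => exact key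
  · intro h
    have top_bot : ∀ {a b : Fin k}, q.r (Sum.inl a) (Sum.inr b) →
        (bigS p q).r (Sum.inl a) (Sum.inr (Sum.inr b)) := by
      intro a b hab
      have hQa := (projThru hqs hqq hab).1
      have hPa := qthruP hps hpp hqs hqq hpq hQa
      have c1 : (bigS p q).r (Sum.inl a) (Sum.inr (Sum.inl a)) :=
        bigS_top (u := Sum.inl a) (v := Sum.inr a) hPa
      have c2 : (bigS p q).r (Sum.inr (Sum.inl a)) (Sum.inr (Sum.inr b)) :=
        bigS_bot (u := Sum.inl a) (v := Sum.inr b) hab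
      exact rtrans c1 c2
    match x, y with
    | Sum.inl a, Sum.inl a' =>
      by_cases hPa : p.r (Sum.inl a) (Sum.inr a)
      · have hPa' := pprop hps hpp hqs hpq h hPa
        have c1 : (bigS p q).r (Sum.inl a) (Sum.inr (Sum.inl a)) :=
          bigS_top (u := Sum.inl a) (v := Sum.inr a) hPa
        have c2 : (bigS p q).r (Sum.inr (Sum.inl a)) (Sum.inr (Sum.inl a')) :=
          bigS_bot (u := Sum.inl a) (v := Sum.inl a') h
        have c3 : (bigS p q).r (Sum.inl a') (Sum.inr (Sum.inl a')) :=
          bigS_top (u := Sum.inl a') (v := Sum.inr a') hPa'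
        have cc : (bigS p q).r (Sum.inl a) (Sum.inl a') := rtrans (rtrans c1 c2) (rsymm c3)
        exact cc
      · have hrel := claimC hps hpp hqs hpq hPa h
        have cc : (bigS p q).r (Sum.inl a) (Sum.inl a') :=
          bigS_top (u := Sum.inl a) (v := Sum.inl a') hrel
        exact cc
    | Sum.inl a, Sum.inr b => exact top_bot h
    | Sum.inr b, Sum.inl a => exact rsymm (top_bot (rsymm h))
    | Sum.inr b, Sum.inr b' =>
      exact bigS_bot (P := p) (Q := q) (u := Sum.inr b) (v := Sum.inr b') h

lemma mid_class4 (hps : swapP p = p) (hpp : compP p p = p) (hqs : swapP q = q)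
    (hqq : compP q q = q) (hpq : compP p q = q) {a : Fin k}
    (hLO : ∀ b, ¬ p.r (Sum.inl b) (Sum.inr a)) {z}
    (h : (bigS p q).r (Sum.inr (Sum.inl a)) z) :
    ∃ a', z = Sum.inr (Sum.inl a') ∧ p.r (Sum.inr a) (Sum.inr a') := by
  refine class_inv
    (fun z => ∃ a', z = Sum.inr (Sum.inl a') ∧ p.r (Sum.inr a) (Sum.inr a'))
    ?_ h ⟨a, rfl, rrefl p _⟩
  rintro x y (⟨u, v, huv, rfl, rfl⟩ | ⟨u, v, huv, rfl, rfl⟩) ⟨a', hx, ha'⟩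
  · match u, hx with
    | Sum.inr c, hx =>
      obtain rfl : c = a' := by simpa using hx
      match v with
      | Sum.inl b => exact absurd (rsymm (rtrans ha' huv)) (hLO b)
      | Sum.inr a'' => exact ⟨a'', rfl, rtrans ha' huv⟩
  · match u, hx with
    | Sum.inl c, hx =>
      obtain rfl : c = a' := by simpa using hx
      match v with
      | Sum.inr b =>
        have h6 := (projThru hqs hqq huv).1
        have h7 := qthruP hps hpp hqs hqq hpq h6
        have h8 : p.r (Sum.inl c) (Sum.inr a) := rtrans h7 (rsymm ha')
        exact absurd h8 (hLO c)
      | Sum.inl a'' =>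
        have hna' : ¬ p.r (Sum.inl c) (Sum.inr c) := fun hth =>
          (hLO c) (rtrans hth (rsymm ha'))
        have h9 := claimC hps hpp hqs hpq hna' huv
        exact ⟨a'', rfl, rtrans ha' (sswap hps h9)⟩

lemma rl4 (hps : swapP p = p) (hpp : compP p p = p) (hqs : swapP q = q)
    (hqq : compP q q = q) (hpq : compP p q = q) : rlP q p = UPn p := by
  unfold rlP UPn
  apply card_common
    (f := fun (a : {a : Fin k // ∀ b, ¬ p.r (Sum.inl b) (Sum.inr a)}) =>
      (⟨Quotient.mk (bigS p q) (Sum.inr (Sum.inl a.1)), by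
        intro x hx
        rw [mkq_eq] at hx
        obtain ⟨a', ha', -⟩ := mid_class4 hps hpp hqs hqq hpq a.2 (rsymm hx)
        exact ⟨a', ha'⟩⟩))
    (g := fun a => (⟨Quotient.mk p (Sum.inl a.1), by
        intro x hx
        match x with
        | Sum.inl a' => exact ⟨a', rfl⟩
        | Sum.inr b =>
          rw [mkq_eq] at hx
          exact absurd (sswap hps hx) (a.2 b)⟩ : {c : Quotient p // upC p c}))
  · rintro ⟨c, hc⟩
    obtain ⟨x, rfl⟩ := Quotient.exists_rep c
    obtain ⟨a, rfl⟩ := hc x rfl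
    refine ⟨⟨a, fun b hb => ?_⟩, rfl⟩
    have e : (bigS p q).r (Sum.inl b) (Sum.inr (Sum.inl a)) :=
      bigS_top (u := Sum.inl b) (v := Sum.inr a) hb
    obtain ⟨b', hb'⟩ := hc _ (mkq_eq.2 e)
    simp at hb'
  · rintro ⟨c, hc⟩
    obtain ⟨x, rfl⟩ := Quotient.exists_rep c
    obtain ⟨a, rfl⟩ := hc x rfl
    refine ⟨⟨a, fun b hb => ?_⟩, rfl⟩
    obtain ⟨a', ha'⟩ := hc _ (mkq_eq.2 (sswap hps hb))
    simp at ha'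
  · intro i j
    refine (Subtype.mk_eq_mk.trans mkq_eq).trans (Iff.trans ?_ (Subtype.mk_eq_mk.trans mkq_eq).symm)
    constructor
    · intro h
      obtain ⟨a', ha', hrel⟩ := mid_class4 hps hpp hqs hqq hpq i.2 h
      obtain rfl : (j.1 : Fin k) = a' := by simpa using ha'
      exact sswap hps hrel
    · intro h
      have e : (bigS p q).r (Sum.inr (Sum.inl i.1)) (Sum.inr (Sum.inl j.1)) :=
        bigS_top (u := Sum.inr i.1) (v := Sum.inr j.1) (sswap hps h)
      exact e

lemma beta2U (hps : swapP p = p) : betaP p = 2 * UPn p := by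
  have h := UPn_swap p
  rw [hps] at h
  rw [betaP_eq, ← h]
  ring

lemma stmt4 (hp : isProjective p) (hq : isProjective q) (hpq : compP p q = q) :
    gammaP q p = 0 := by
  obtain ⟨hps, hpp⟩ := hp
  obtain ⟨hqs, hqq⟩ := hq
  unfold gammaP
  rw [comp_qp hps hpp hqs hqq hpq, rl4 hps hpp hqs hqq hpq, beta2U hps]
  push_cast
  ring

lemma stmt3 (hp : isProjective p) : gammaP p p = 0 := by
  have h := stmt1a p
  rw [hp.1] at h
  exact h

end Projective

end GammaVanishingAux

/-- `γ(p,p*) = 0` and `γ(p,p*p) = 0` for every partition `p` (in particular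
`γ(p,p) = 0` for projective `p`), and `γ(q,p) = 0` for projective `p,q` with `pq = q`. -/
theorem gamma_vanishing :
    (∀ (k l : ℕ) (p : PP k l), gammaP p (swapP p) = 0 ∧ gammaP p (compP (swapP p) p) = 0) ∧
    (∀ (k : ℕ) (p : PP k k), isProjective p → gammaP p p = 0) ∧
    (∀ (k : ℕ) (p q : PP k k), isProjective p → isProjective q → compP p q = q →
      gammaP q p = 0) := by
  exact ⟨fun _ _ p => ⟨GammaVanishingAux.stmt1a p, GammaVanishingAux.stmt1b p⟩,
    fun _ _ hp => GammaVanishingAux.stmt3 hp,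
    fun _ _ _ hp hq hpq => GammaVanishingAux.stmt4 hp hq hpq⟩
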